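/- arXiv:2102.00518 — 2 statements merged into one kernel-verified Lean document; each statement's English description precedes it below -/
import Mathlib

section
/- Define iterated antiderivatives of the right Radau polynomial $R^-_{k+1}=\phi_{k+1}-\phi_k$ by $R^{-,(0)}_{k+1}=R^-_{k+1}$ and $R^{-,(-l-1)}_{k+1}(y)=\int_{-1}^y R^{-,(-l)}_{k+1}(z)\,dz$. Then for $0\le l\le k$, $R^{-,(-l)}_{k+1}$ is a linear combination $\sum_{i=k-l}^{k+l+1} c^l_i \phi_i$ of Legendre polynomials of degrees between $k-l$ and $k+l+1$, and the lowest coefficient is $c^l_{k-l} = (-1)^{l+1}\frac{(2k-2l+1)!!}{(2k+1)!!}$. -/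
open Polynomial

/-- The Legendre polynomial of degree `n` on `[-1,1]`, normalized so that it
takes the value `1` at `1` (Rodrigues' formula). -/
noncomputable def legendre (n : ℕ) : Polynomial ℝ :=
  Polynomial.C (1 / (2^n * (n.factorial : ℝ))) *
    (Polynomial.derivative)^[n] ((Polynomial.X^2 - 1)^n)

/-- Iterated antiderivatives of the right Radau polynomial `R⁻_{k+1} = φ_{k+1} - φ_k`:
`radauIter k 0 = R⁻_{k+1}` and `radauIter k (l+1) y = ∫_{-1}^y radauIter k l`. -/
noncomputable def radauIter (k : ℕ) : ℕ → ℝ → ℝ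
  | 0 => fun y => (legendre (k+1) - legendre k).eval y
  | (l+1) => fun y => ∫ z in (-1 : ℝ)..y, radauIter k l z

lemma deriv2_key (n : ℕ) : derivative (derivative ((X^2 - 1 : ℝ[X])^(n+2))) =
    C (2*(n+2)*(2*n+3) : ℝ) * (X^2-1)^(n+1) + C (4*(n+1)*(n+2) : ℝ) * (X^2-1)^n := by
  have h : (X^2 - 1 : ℝ[X])^(n+1) = (X^2-1)^n * X^2 - (X^2-1)^n := by ring
  simp only [derivative_pow, derivative_sub, derivative_X_pow, derivative_one, derivative_mul,
    derivative_C, derivative_X, derivative_zero, derivative_natCast, derivative_ofNat,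
    derivative_add, h, map_add, map_mul, map_ofNat, map_one, Polynomial.C_eq_natCast]
  push_cast
  ring

lemma iter_key (n : ℕ) : derivative^[n+3] ((X^2-1 : ℝ[X])^(n+2)) =
      C (2*(n+2)*(2*n+3) : ℝ) * derivative^[n+1] ((X^2-1)^(n+1)) +
      C (4*(n+1)*(n+2) : ℝ) * derivative^[n+1] ((X^2-1)^n) := by
  have h3 : derivative^[n+3] ((X^2-1 : ℝ[X])^(n+2)) =
      derivative^[n+1] (derivative (derivative ((X^2-1 : ℝ[X])^(n+2)))) := by
    rw [show n+3 = (n+1)+2 from by ring, Function.iterate_add_apply]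
    rfl
  rw [h3, deriv2_key, iterate_map_add, iterate_derivative_C_mul, iterate_derivative_C_mul]


lemma deriv_legendre_sub (n : ℕ) :
    derivative (legendre (n+2)) - derivative (legendre n) = C (2*n+3 : ℝ) * legendre (n+1) := by
  have e2 : derivative (legendre (n+2)) =
      C (1 / (2^(n+2) * ((n+2).factorial : ℝ))) * derivative^[n+3] ((X^2-1)^(n+2)) := by
    rw [legendre, derivative_C_mul, ← Function.iterate_succ_apply' derivative]
  have e0 : derivative (legendre n) =
      C (1 / (2^n * (n.factorial : ℝ))) * derivative^[n+1] ((X^2-1)^n) := by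
    rw [legendre, derivative_C_mul, ← Function.iterate_succ_apply' derivative]
  have hQ : (1 / (2^(n+2) * ((n+2).factorial : ℝ))) * (4*((n:ℝ)+1)*((n:ℝ)+2)) =
      1 / (2^n * (n.factorial:ℝ)) := by
    have h1 : ((n+2).factorial : ℝ) = ((n:ℝ)+2) * (((n:ℝ)+1) * n.factorial) := by
      push_cast [Nat.factorial_succ]; ring
    have h2 : (n.factorial : ℝ) ≠ 0 := Nat.cast_ne_zero.2 n.factorial_ne_zero
    rw [h1]; field_simp; ring
  have hP : (1 / (2^(n+2) * ((n+2).factorial : ℝ))) * (2*((n:ℝ)+2)*(2*(n:ℝ)+3)) =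
      (2*(n:ℝ)+3) * (1 / (2^(n+1) * ((n+1).factorial:ℝ))) := by
    have h1 : ((n+2).factorial : ℝ) = ((n:ℝ)+2) * ((n+1).factorial : ℝ) := by
      push_cast [Nat.factorial_succ]; ring
    have h2 : ((n+1).factorial : ℝ) ≠ 0 := Nat.cast_ne_zero.2 (n+1).factorial_ne_zero
    rw [h1]; field_simp; ring
  rw [e2, e0, iter_key, legendre, mul_add, ← mul_assoc, ← mul_assoc, ← C_mul, ← C_mul,
    hQ, hP, C_mul]
  ring

lemma aux_eval (n : ℕ) : ∀ k, k ≤ n → ∃ q : ℝ[X],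
    derivative^[k] ((X^2-1 : ℝ[X])^n) = (X+1)^(n-k) * q ∧
    q.eval (-1) = (n.descFactorial k : ℝ) * (-2)^n := by
  intro k
  induction k with
  | zero =>
    intro _
    refine ⟨(X-1)^n, ?_, ?_⟩
    · rw [Function.iterate_zero_apply, Nat.sub_zero, ← mul_pow]
      congr 1; ring
    · simp only [eval_pow, eval_sub, eval_X, eval_one, Nat.descFactorial_zero, Nat.cast_one,
        one_mul]
      norm_num
  | succ k ih =>
    intro hk
    obtain ⟨q, hq, he⟩ := ih (Nat.le_of_succ_le hk)
    have hnk : (n - (k+1) + 1 : ℕ) = n - k := by omega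
    have hC : ((n - k : ℕ) : ℝ) = (n:ℝ) - k := by
      rw [Nat.cast_sub (Nat.le_of_succ_le hk)]
    refine ⟨C ((n:ℝ) - k) * q + (X+1) * derivative q, ?_, ?_⟩
    · rw [Function.iterate_succ_apply', hq]
      have hm : n - k = (n - (k+1)) + 1 := by omega
      rw [hm, derivative_mul, derivative_pow, hnk, hC,
        show n - k - 1 = n - (k+1) from by omega, hm, pow_succ]
      simp only [derivative_add, derivative_X, derivative_one, add_zero]
      ring
    · simp only [eval_add, eval_mul, eval_C, eval_pow, eval_X, eval_one, he]
      have h0 : (-1 : ℝ) + 1 = 0 := by ring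
      rw [h0]
      have hd : (n.descFactorial (k+1) : ℝ) = ((n:ℝ) - k) * (n.descFactorial k : ℝ) := by
        rw [Nat.descFactorial_succ]
        push_cast [Nat.cast_sub (Nat.le_of_succ_le hk)]
        ring
      rw [hd]
      ring


lemma legendre_eval_neg_one (n : ℕ) : (legendre n).eval (-1) = (-1)^n := by
  obtain ⟨q, hq, he⟩ := aux_eval n n le_rfl
  rw [legendre, eval_mul, eval_C, hq]
  simp only [Nat.sub_self, pow_zero, one_mul, eval_mul, eval_pow, he, Nat.descFactorial_self]
  have h2 : ((-2 : ℝ))^n = (-1)^n * 2^n := by rw [← neg_one_mul, mul_pow]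
  have hf : (n.factorial : ℝ) ≠ 0 := Nat.cast_ne_zero.2 n.factorial_ne_zero
  have h2n : (2:ℝ)^n ≠ 0 := by positivity
  rw [h2]
  field_simp [h2]

lemma integral_legendre' (i : ℕ) (hi : 1 ≤ i) (y : ℝ) :
    ∫ z in (-1:ℝ)..y, (legendre i).eval z =
      ((2*i+1 : ℕ) : ℝ)⁻¹ * ((legendre (i+1)).eval y - (legendre (i-1)).eval y) := by
  obtain ⟨n, rfl⟩ : ∃ n, i = n + 1 := ⟨i - 1, by omega⟩
  have ht : (2*(n:ℝ)+3) ≠ 0 := by positivity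
  set P : ℝ[X] := C ((2*(n:ℝ)+3)⁻¹) * (legendre (n+2) - legendre n) with hP
  have hPd : derivative P = legendre (n+1) := by
    rw [hP, derivative_C_mul, derivative_sub, deriv_legendre_sub, ← mul_assoc, ← C_mul,
      inv_mul_cancel₀ ht, C_1, one_mul]
  have hderiv : ∀ x ∈ Set.uIcc (-1:ℝ) y, HasDerivAt (fun t => P.eval t)
      ((legendre (n+1)).eval x) x := by
    intro x _
    simpa [hPd] using P.hasDerivAt x
  have hint : IntervalIntegrable (fun t => (legendre (n+1)).eval t)
      MeasureTheory.volume (-1) y :=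
    ((legendre (n+1)).continuous_aeval).intervalIntegrable _ _
  have := intervalIntegral.integral_eq_sub_of_hasDerivAt hderiv hint
  rw [this]
  have hnegone : P.eval (-1) = 0 := by
    simp [hP, legendre_eval_neg_one, pow_succ]
  rw [hnegone, sub_zero, hP]
  have hcast : ((2*(n+1)+1 : ℕ) : ℝ) = 2*(n:ℝ)+3 := by push_cast; ring
  simp only [eval_mul, eval_C, eval_sub, hcast, Nat.add_sub_cancel]

lemma main_aux (k : ℕ) : ∀ l, l ≤ k → ∃ c : ℕ → ℝ,
    (∀ i, i < k - l → c i = 0) ∧ (∀ i, k + l + 2 ≤ i → c i = 0) ∧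
    (∀ y, radauIter k l y = ∑ i ∈ Finset.range (k+l+2), c i * (legendre i).eval y) ∧
    c (k - l) = (-1)^(l+1) *
      (Nat.doubleFactorial (2*(k-l)+1) : ℝ) / (Nat.doubleFactorial (2*k+1) : ℝ) := by
  intro l
  induction l with
  | zero =>
    intro _
    refine ⟨fun i => if i = k+1 then 1 else if i = k then -1 else 0, ?_, ?_, ?_, ?_⟩
    · intro i hi
      simp only [Nat.sub_zero] at hi
      beta_reduce
      rw [if_neg (by omega), if_neg (by omega)]
    · intro i hi
      beta_reduce
      rw [if_neg (by omega), if_neg (by omega)]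
    · intro y
      rw [show k + 0 + 2 = (k+1)+1 from by ring, Finset.sum_range_succ, Finset.sum_range_succ,
        Finset.sum_eq_zero (fun i hi => by
          simp only [Finset.mem_range] at hi
          beta_reduce
          rw [if_neg (by omega), if_neg (by omega), zero_mul])]
      beta_reduce
      rw [if_pos rfl, if_neg (by omega), if_pos rfl]
      simp only [radauIter, eval_sub]
      ring
    · beta_reduce
      rw [Nat.sub_zero, if_neg (by omega), if_pos rfl]
      have h0 : ((2*k+1).doubleFactorial : ℝ) ≠ 0 :=
        Nat.cast_ne_zero.2 (Nat.doubleFactorial_pos _).ne'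
      rw [pow_one, mul_div_assoc, div_self h0, mul_one]
  | succ l ih =>
    intro hl1
    obtain ⟨c, hlow, hhigh, hsum, hval⟩ := ih (by omega)
    have hm1 : 1 ≤ k - l := by omega
    set m := k - l with hm
    have hc0 : c 0 = 0 := hlow 0 (by omega)
    set N := k + l + 2 with hN
    refine ⟨fun j => (if 1 ≤ j then c (j-1) * ((2*(j-1)+1 : ℕ) : ℝ)⁻¹ else 0)
      - c (j+1) * ((2*(j+1)+1 : ℕ) : ℝ)⁻¹, ?_, ?_, ?_, ?_⟩
    · intro i hi
      have h1 : k - (l+1) = m - 1 := by omega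
      rw [h1] at hi
      beta_reduce
      rw [hlow (i+1) (by omega)]
      rcases Nat.eq_zero_or_pos i with h | h
      · simp [h]
      · rw [if_pos (show 1 ≤ i from h), hlow (i-1) (by omega)]
        ring
    · intro i hi
      beta_reduce
      rw [hhigh (i+1) (by omega)]
      have h : 1 ≤ i := by omega
      rw [if_pos h, hhigh (i-1) (by omega)]
      ring
    · intro y
      have hint : ∀ i : ℕ, IntervalIntegrable (fun z => c i * (legendre i).eval z)
          MeasureTheory.volume (-1) y :=
        fun i => (((legendre i).continuous_aeval).const_smul (c i)).intervalIntegrable _ _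
      have step1 : radauIter k (l+1) y =
          ∑ i ∈ Finset.range N, c i * ∫ z in (-1:ℝ)..y, (legendre i).eval z := by
        show (∫ z in (-1:ℝ)..y, radauIter k l z) = _
        rw [intervalIntegral.integral_congr (g := fun z => ∑ i ∈ Finset.range N,
            c i * (legendre i).eval z) (fun z _ => hsum z)]
        rw [intervalIntegral.integral_finset_sum (fun i _ => hint i)]
        exact Finset.sum_congr rfl fun i _ => intervalIntegral.integral_const_mul _ _
      have step2 : radauIter k (l+1) y = ∑ i ∈ Finset.range N,
          c i * (((2*i+1 : ℕ) : ℝ)⁻¹ * ((legendre (i+1)).eval y - (legendre (i-1)).eval y)) := by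
        rw [step1]
        refine Finset.sum_congr rfl fun i _ => ?_
        rcases Nat.eq_zero_or_pos i with h | h
        · rw [h, hc0, zero_mul, zero_mul]
        · rw [integral_legendre' i h]
      rw [step2]
      have expand : ∀ i : ℕ,
          c i * (((2*i+1 : ℕ) : ℝ)⁻¹ * ((legendre (i+1)).eval y - (legendre (i-1)).eval y)) =
          c i * ((2*i+1 : ℕ) : ℝ)⁻¹ * (legendre (i+1)).eval y
          - c i * ((2*i+1 : ℕ) : ℝ)⁻¹ * (legendre (i-1)).eval y := fun i => by ring
      simp only [expand]
      rw [Finset.sum_sub_distrib]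
      have hS1 : ∑ i ∈ Finset.range N, c i * ((2*i+1 : ℕ) : ℝ)⁻¹ * (legendre (i+1)).eval y =
          ∑ j ∈ Finset.range (N+1), (if 1 ≤ j then c (j-1) * ((2*(j-1)+1 : ℕ) : ℝ)⁻¹ else 0)
            * (legendre j).eval y := by
        rw [Finset.sum_range_succ' (fun j => (if 1 ≤ j then c (j-1) * ((2*(j-1)+1 : ℕ) : ℝ)⁻¹
          else 0) * (legendre j).eval y) N]
        simp only [if_neg (by omega : ¬ (1 ≤ 0)), zero_mul, add_zero]
        refine Finset.sum_congr rfl fun i _ => ?_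
        rw [if_pos (by omega), Nat.add_sub_cancel]
      have hS2 : ∑ i ∈ Finset.range N, c i * ((2*i+1 : ℕ) : ℝ)⁻¹ * (legendre (i-1)).eval y =
          ∑ j ∈ Finset.range (N+1), c (j+1) * ((2*(j+1)+1 : ℕ) : ℝ)⁻¹ * (legendre j).eval y := by
        conv_lhs => rw [hN, show k + l + 2 = (k+l+1) + 1 from rfl,
          Finset.sum_range_succ' (fun i => c i * ((2*i+1 : ℕ) : ℝ)⁻¹ * (legendre (i-1)).eval y)
            (k+l+1)]
        conv_rhs => rw [hN, show k + l + 2 + 1 = ((k+l+1) + 1) + 1 from rfl,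
          Finset.sum_range_succ, Finset.sum_range_succ]
        rw [hc0, zero_mul, zero_mul, add_zero,
          hhigh (k+l+1+1) (by omega), hhigh (k+l+1+1+1) (by omega)]
        simp only [zero_mul, add_zero]
        refine Finset.sum_congr rfl fun i _ => ?_
        rw [Nat.add_sub_cancel]
      rw [hS1, hS2, ← Finset.sum_sub_distrib]
      refine (Finset.sum_congr (by rw [show k + (l+1) + 2 = N + 1 from by omega])
        fun j _ => ?_).symm
      beta_reduce
      ring
    · have h1 : k - (l+1) = m - 1 := by omega
      rw [h1]
      beta_reduce
      have hm2 : c (m-1-1) = 0 := hlow _ (by omega)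
      have hfirst : (if 1 ≤ m-1 then c (m-1-1) * ((2*(m-1-1)+1 : ℕ) : ℝ)⁻¹ else 0) = 0 := by
        split
        · rw [hm2, zero_mul]
        · rfl
      rw [hfirst, zero_sub, show m - 1 + 1 = m from by omega, hval]
      have hdf : ((2*m+1).doubleFactorial : ℝ) =
          ((2*m+1 : ℕ) : ℝ) * ((2*(m-1)+1).doubleFactorial : ℝ) := by
        conv_lhs => rw [show 2*m+1 = (2*(m-1)+1) + 2 from by omega, Nat.doubleFactorial_add_two]
        rw [show 2*(m-1)+1+2 = 2*m+1 from by omega]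
        push_cast
        ring
      have hB : ((2*k+1).doubleFactorial : ℝ) ≠ 0 :=
        Nat.cast_ne_zero.2 (Nat.doubleFactorial_pos _).ne'
      have ht : ((2*m+1 : ℕ) : ℝ) ≠ 0 := by positivity
      rw [hdf]
      field_simp
      ring

theorem stmt4 (k l : ℕ) (hl : l ≤ k) :
    ∃ c : ℕ → ℝ,
      (∀ y : ℝ, radauIter k l y =
        ∑ i ∈ Finset.Icc (k - l) (k + l + 1), c i * (legendre i).eval y) ∧
      c (k - l) = (-1)^(l+1) *
        (Nat.doubleFactorial (2*(k-l)+1) : ℝ) / (Nat.doubleFactorial (2*k+1) : ℝ) := by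
  obtain ⟨c, hlow, hhigh, hsum, hval⟩ := main_aux k l hl
  refine ⟨c, fun y => ?_, hval⟩
  rw [hsum y]
  exact (Finset.sum_subset
    (fun i hi => Finset.mem_range.2 (by simp only [Finset.mem_Icc] at hi; omega))
    (fun i hi hni => by
      rw [hlow i (by simp only [Finset.mem_Icc] at hni; simp only [Finset.mem_range] at hi; omega),
        zero_mul])).symm
end

section
/- With $R^{-,(-l)}_{k+1}$ the iterated antiderivatives of the right Radau polynomial as above, one has $R^{-,(-l)}_{k+1}(1)=0$ for $1\le l\le k$, while $R^{-,(-k-1)}_{k+1}(1) = (-1)^{k+1}\frac{2}{(2k+1)!!}$. -/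
open Polynomial

lemma poly_ii (p : Polynomial ℝ) (a b : ℝ) :
    IntervalIntegrable (fun x => p.eval x) MeasureTheory.volume a b :=
  p.continuous.intervalIntegrable a b

lemma ftc_poly (p : Polynomial ℝ) (a b : ℝ) :
    ∫ x in a..b, (derivative p).eval x = p.eval b - p.eval a := by
  apply intervalIntegral.integral_eq_sub_of_hasDerivAt
  · intro x _; exact p.hasDerivAt x
  · exact poly_ii _ a b

lemma iter_deriv_factor (n : ℕ) : ∀ j ≤ n, ∃ Q : Polynomial ℝ,
    derivative^[j] (((X:Polynomial ℝ)^2 - 1)^n) = ((X:Polynomial ℝ)^2 - 1)^(n-j) * Q := by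
  intro j
  induction j with
  | zero => intro _; exact ⟨1, by simp⟩
  | succ j ih =>
    intro hj
    obtain ⟨Q, hQ⟩ := ih (Nat.le_of_succ_le hj)
    refine ⟨C (((n - (j+1) + 1 : ℕ)) : ℝ) * (2 * X) * Q + ((X:Polynomial ℝ)^2 - 1) * derivative Q, ?_⟩
    rw [Function.iterate_succ_apply', hQ]
    have h1 : n - j = (n - (j+1)) + 1 := by omega
    rw [h1, derivative_mul, derivative_pow]
    have h2 : derivative (((X:Polynomial ℝ))^2 - 1) = 2 * X := by
      simp [derivative_pow]; exact map_ofNat C 2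
    rw [h2]
    push_cast
    ring

lemma eval_vanish (n j : ℕ) (hj : j < n) (x : ℝ) (hx : x^2 = 1) :
    (derivative^[j] (((X:Polynomial ℝ)^2 - 1)^n)).eval x = 0 := by
  obtain ⟨Q, hQ⟩ := iter_deriv_factor n j hj.le
  rw [hQ, eval_mul, eval_pow, eval_sub, eval_pow, eval_one, eval_X, hx]
  have : n - j ≠ 0 := by omega
  simp [zero_pow this]

lemma Ival : ∀ k : ℕ, (∫ x in (-1:ℝ)..1, ((((X:Polynomial ℝ)^2 - 1)^k)).eval x)
    = (-1)^k * 2^(2*k+1) * ((k.factorial : ℝ))^2 / ((2*k+1).factorial : ℝ) := by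
  intro k
  induction k with
  | zero => simp; norm_num
  | succ k ih =>
    have hpoly : derivative ((X:Polynomial ℝ) * ((X:Polynomial ℝ)^2 - 1)^(k+1))
        = ((2*k+3 : ℕ) : Polynomial ℝ) * ((X:Polynomial ℝ)^2 - 1)^(k+1)
          + ((2*k+2 : ℕ) : Polynomial ℝ) * ((X:Polynomial ℝ)^2 - 1)^k := by
      rw [derivative_mul, derivative_X, derivative_pow]
      have h2 : derivative (((X:Polynomial ℝ))^2 - 1) = 2 * X := by
        simp [derivative_pow]; exact map_ofNat C 2
      rw [h2]
      have h3 : ((X:Polynomial ℝ)^2 - 1)^(k+1) = ((X:Polynomial ℝ)^2 - 1)^k * ((X:Polynomial ℝ)^2 - 1) :=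
        pow_succ _ _
      rw [h3]
      simp only [C_eq_natCast]
      push_cast
      ring
    have hftc := ftc_poly ((X:Polynomial ℝ) * ((X:Polynomial ℝ)^2 - 1)^(k+1)) (-1) 1
    rw [hpoly] at hftc
    have hsplit : (∫ x in (-1:ℝ)..1, (((2*k+3 : ℕ) : Polynomial ℝ) * ((X:Polynomial ℝ)^2 - 1)^(k+1)
          + ((2*k+2 : ℕ) : Polynomial ℝ) * ((X:Polynomial ℝ)^2 - 1)^k).eval x)
        = ((2*k+3 : ℕ) : ℝ) * (∫ x in (-1:ℝ)..1, ((((X:Polynomial ℝ)^2 - 1)^(k+1))).eval x)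
          + ((2*k+2 : ℕ) : ℝ) * (∫ x in (-1:ℝ)..1, ((((X:Polynomial ℝ)^2 - 1)^k)).eval x) := by
      simp only [eval_add, eval_mul, eval_natCast]
      rw [intervalIntegral.integral_add
          ((poly_ii ((((X:Polynomial ℝ)^2 - 1)^(k+1))) _ _).const_mul _)
          ((poly_ii ((((X:Polynomial ℝ)^2 - 1)^k)) _ _).const_mul _),
        intervalIntegral.integral_const_mul, intervalIntegral.integral_const_mul]
    rw [hsplit, ih] at hftc
    simp only [eval_mul, eval_X, eval_pow, eval_sub, eval_one] at hftc
    norm_num at hftc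
    have h23 : ((2*k+3 : ℕ) : ℝ) ≠ 0 := by positivity
    have hf1 : ((2*(k+1)+1).factorial : ℝ) = ((2*k+3 : ℕ) : ℝ) * ((2*k+2 : ℕ) : ℝ) * ((2*k+1).factorial : ℝ) := by
      have : 2*(k+1)+1 = (2*k+2)+1 := by ring
      rw [this]
      rw [Nat.factorial_succ, show (2*k+2) = (2*k+1)+1 from by ring, Nat.factorial_succ]
      push_cast; ring
    have hf2 : (((k+1).factorial : ℝ)) = ((k+1 : ℕ) : ℝ) * (k.factorial : ℝ) := by
      rw [Nat.factorial_succ]; push_cast; ring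
    have hfp : ((2*k+1).factorial : ℝ) ≠ 0 := by positivity
    field_simp [hf1, hf2] at hftc ⊢
    rw [hf1, hf2]
    simp only [eval_pow, eval_sub, eval_X, eval_one]
    push_cast at hftc ⊢
    linear_combination (2*(k:ℝ)+2) * hftc


theorem stmt5 (k : ℕ) :
    (∀ l : ℕ, 1 ≤ l → l ≤ k → radauIter k l 1 = 0) ∧
    radauIter k (k+1) 1 = (-1)^(k+1) * 2 / (Nat.doubleFactorial (2*k+1) : ℝ) := by
  set a : ℝ := 1 / (2^(k+1) * ((k+1).factorial : ℝ)) with ha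
  set b : ℝ := 1 / (2^k * ((k).factorial : ℝ)) with hb
  set P : ℕ → Polynomial ℝ := fun l =>
    C a * derivative^[k+1-l] (((X:Polynomial ℝ)^2 - 1)^(k+1))
      - C b * derivative^[k-l] (((X:Polynomial ℝ)^2 - 1)^k) with hP
  have key : ∀ l ≤ k, radauIter k l = fun y => (P l).eval y := by
    intro l
    induction l with
    | zero =>
      intro _
      funext y
      simp only [radauIter, hP, legendre, Nat.sub_zero, eval_sub]
      rfl
    | succ l ih =>
      intro hl
      have ih' := ih (by omega)
      have hd : derivative (P (l+1)) = P l := by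
        simp only [hP, derivative_sub, derivative_C_mul]
        rw [← Function.iterate_succ_apply' derivative (k+1-(l+1)),
            ← Function.iterate_succ_apply' derivative (k-(l+1))]
        simp only [Nat.succ_eq_add_one]
        rw [show (k+1-(l+1))+1 = k+1-l from by omega, show (k-(l+1))+1 = k-l from by omega]
      have hm1 : (P (l+1)).eval (-1) = 0 := by
        simp only [hP, eval_sub, eval_mul, eval_C]
        rw [eval_vanish (k+1) (k+1-(l+1)) (by omega) (-1) (by norm_num),
            eval_vanish k (k-(l+1)) (by omega) (-1) (by norm_num)]
        ring
      funext y
      show (∫ z in (-1:ℝ)..y, radauIter k l z) = (P (l+1)).eval y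
      rw [ih']
      rw [← hd, ftc_poly, hm1]
      ring
  refine ⟨?_, ?_⟩
  · intro l hl1 hl2
    rw [key l hl2]
    simp only [hP, eval_sub, eval_mul, eval_C]
    rw [eval_vanish (k+1) (k+1-l) (by omega) 1 (by norm_num),
        eval_vanish k (k-l) (by omega) 1 (by norm_num)]
    ring
  · have hkk := key k le_rfl
    show (∫ z in (-1:ℝ)..1, radauIter k k z) = _
    rw [hkk]
    have e1 : k+1-k = 1 := by omega
    have e0 : k-k = 0 := by omega
    simp only [hP, e1, e0, Function.iterate_one, Function.iterate_zero, id_eq]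
    have hint : (∫ x in (-1:ℝ)..1,
        (C a * derivative (((X:Polynomial ℝ)^2 - 1)^(k+1))
          - C b * (((X:Polynomial ℝ)^2 - 1)^k)).eval x)
        = a * (∫ x in (-1:ℝ)..1, (derivative (((X:Polynomial ℝ)^2 - 1)^(k+1))).eval x)
          - b * (∫ x in (-1:ℝ)..1, ((((X:Polynomial ℝ)^2 - 1)^k)).eval x) := by
      simp only [eval_sub, eval_mul, eval_C]
      rw [intervalIntegral.integral_sub
          ((poly_ii (derivative (((X:Polynomial ℝ)^2 - 1)^(k+1))) _ _).const_mul _)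
          ((poly_ii ((((X:Polynomial ℝ)^2 - 1)^k)) _ _).const_mul _),
        intervalIntegral.integral_const_mul, intervalIntegral.integral_const_mul]
    rw [hint, ftc_poly, Ival]
    have hF1 : ((((X:Polynomial ℝ)^2 - 1)^(k+1))).eval 1 = 0 := by norm_num
    have hFm1 : ((((X:Polynomial ℝ)^2 - 1)^(k+1))).eval (-1) = 0 := by norm_num
    rw [hF1, hFm1]
    -- arithmetic
    have hdf : ((Nat.doubleFactorial (2*k+1) : ℕ) : ℝ) * (2^k * (k.factorial : ℝ)) = ((2*k+1).factorial : ℝ) := by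
      have h1 : (2*k+1).factorial = Nat.doubleFactorial (2*k+1) * Nat.doubleFactorial (2*k) :=
        Nat.factorial_eq_mul_doubleFactorial (2*k)
      have h2 : Nat.doubleFactorial (2*k) = 2^k * k.factorial := Nat.doubleFactorial_two_mul k
      rw [h1, h2]
      push_cast; ring
    have hdfne : ((Nat.doubleFactorial (2*k+1) : ℕ) : ℝ) ≠ 0 := by
      exact_mod_cast (Nat.doubleFactorial_pos _).ne'
    have hfp : ((2*k+1).factorial : ℝ) ≠ 0 := by positivity
    have hkf : ((k.factorial : ℝ)) ≠ 0 := by positivity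
    rw [hb]
    field_simp
    linear_combination (-((-1:ℝ))^k * 2^(k+1)) * hdf
end
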